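/- In the 4-service two-player uniform-reward ISG defined below, the schedule where both players order their services (a, b, c, d) is a pure Nash equilibrium. -/

import Mathlib

open scoped Classical
noncomputable section

/-- The (1-based) time slot at which service `v` is deployed. -/
def slot {k q : ℕ} (σ : Fin k → Equiv.Perm (Fin q)) (v : Fin k × Fin q) : ℕ :=
  (σ v.1 v.2 : ℕ) + 1

/-- Activation time of `v`: latest deployment among `v` and its in-neighbors. -/
def act {k q : ℕ} (E : Fin k × Fin q → Fin k × Fin q → Prop)
    (σ : Fin k → Equiv.Perm (Fin q)) (v : Fin k × Fin q) : ℕ :=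
  (insert v (Finset.univ.filter fun w => E w v)).sup (slot σ)

/-- Player `i`'s utility under uniform rewards. -/
def util {k q : ℕ} (E : Fin k × Fin q → Fin k × Fin q → Prop)
    (σ : Fin k → Equiv.Perm (Fin q)) (i : Fin k) : ℕ :=
  ∑ j : Fin q, (q + 1 - act E σ (i, j))

/-- Utilitarian social welfare. -/
def welfare {k q : ℕ} (E : Fin k × Fin q → Fin k × Fin q → Prop)
    (σ : Fin k → Equiv.Perm (Fin q)) : ℕ :=
  ∑ i : Fin k, util E σ i

/-- Pure Nash equilibrium: no unilateral deviation improves a player's utility. -/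
def PNE {k q : ℕ} (E : Fin k × Fin q → Fin k × Fin q → Prop)
    (σ : Fin k → Equiv.Perm (Fin q)) : Prop :=
  ∀ (i : Fin k) (τ : Equiv.Perm (Fin q)),
    util E (Function.update σ i τ) i ≤ util E σ i

/-- Base dependency edges: (a₁,a₂), (b₁,b₂), (c₂,c₁), (d₂,d₁),
with services a,b,c,d of player `i` at indices 0,1,2,3. -/
def base12 : Fin 2 × Fin 4 → Fin 2 × Fin 4 → Prop := fun v w =>
  (v, w) ∈ ([((0, 0), (1, 0)), ((0, 1), (1, 1)), ((1, 2), (0, 2)), ((1, 3), (0, 3))] :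
      List ((Fin 2 × Fin 4) × (Fin 2 × Fin 4)))

/-- The dependency relation: transitive closure of the base edges. -/
def E12 : Fin 2 × Fin 4 → Fin 2 × Fin 4 → Prop := Relation.TransGen base12


instance base12.decRel : DecidableRel base12 := fun v w => by
  unfold base12; infer_instance

lemma base_no_comp : ∀ a b c, base12 a b → base12 b c → False := by
  decide

lemma E12_eq : E12 = base12 := by
  funext v w
  apply propext
  constructor
  · intro h
    induction h with
    | single h => exact h
    | tail _ hbc ih => exact (base_no_comp _ _ _ ih hbc).elim
  · exact Relation.TransGen.single

def actB (σ : Fin 2 → Equiv.Perm (Fin 4)) (v : Fin 2 × Fin 4) : ℕ :=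
  (insert v (Finset.univ.filter fun w => base12 w v)).sup (slot σ)

def utilB (σ : Fin 2 → Equiv.Perm (Fin 4)) (i : Fin 2) : ℕ :=
  ∑ j : Fin 4, (4 + 1 - actB σ (i, j))

lemma util_eq (σ : Fin 2 → Equiv.Perm (Fin 4)) (i : Fin 2) :
    util base12 σ i = utilB σ i := by
  unfold util utilB act actB
  apply Finset.sum_congr rfl
  intro j _
  congr 2
  · exact congrArg _ (Finset.filter_congr_decidable Finset.univ (fun w => base12 w (i, j)) _)

lemma key : ∀ (i : Fin 2) (τ : Equiv.Perm (Fin 4)),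
    utilB (Function.update (fun _ => 1) i τ) i ≤ utilB (fun _ => 1) i := by
  decide

/-- The schedule where both players order their services (a, b, c, d) is a PNE. -/
theorem stmt_12 : PNE E12 (fun _ => 1) := by
  intro i τ
  rw [show E12 = base12 from E12_eq, util_eq, util_eq]
  exact key i τ
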